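/- Let a ≥ 1 and n ≥ 1 be integers, let w be a valid m-acyclic weight function of the extended Shi arrangement 𝒜^{a,a+1}_{n−1}, and let (f(1),…,f(n)) be its Pak–Stanley label. Then (f(1),…,f(n)) is an a-parking function of length n. -/

import Mathlib

/-- Cyclically consecutive pairs along a list of vertices. -/
def cpairs {n : ℕ} (c : List (Fin n)) : List (Fin n × Fin n) := c.zip (c.rotate 1)

/-- `c` is a directed cycle of the weighted digraph `w`, an edge `u → v`
being present when `w u v ≠ ⊥` (`⊥` stands for `-∞`). -/
def IsCycle {n : ℕ} (w : Fin n → Fin n → WithBot ℤ) (c : List (Fin n)) : Prop :=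
  2 ≤ c.length ∧ c.Nodup ∧ ∀ p ∈ cpairs c, w p.1 p.2 ≠ ⊥

/-- Total weight of the edges of a cycle. -/
def cycWeight {n : ℕ} (w : Fin n → Fin n → WithBot ℤ) (c : List (Fin n)) : WithBot ℤ :=
  ((cpairs c).map fun p => w p.1 p.2).sum

/-- An `m`-ascending cycle: a directed cycle of nonnegative total weight. -/
def MAscending {n : ℕ} (w : Fin n → Fin n → WithBot ℤ) (c : List (Fin n)) : Prop :=
  IsCycle w c ∧ 0 ≤ cycWeight w c

/-- A weighted digraph is `m`-acyclic if it has no `m`-ascending cycle. -/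
def MAcyclic {n : ℕ} (w : Fin n → Fin n → WithBot ℤ) : Prop :=
  ∀ c : List (Fin n), ¬ MAscending w c

/-- `w` is a valid weight function of the contiguous integral deformation of
the braid arrangement determined by the bounds `a = α` and `b = β`:
`w i j ∈ {α i j, …, β i j} ∪ {⊥}`, `w i j = ⊥ ↔ w j i = β j i`, and
`w j i = -1 - w i j` whenever both values are finite.  There are no loops. -/
def ValidW {n : ℕ} (a b : Fin n → Fin n → ℤ) (w : Fin n → Fin n → WithBot ℤ) : Prop :=
  (∀ i, w i i = ⊥) ∧
  ∀ i j : Fin n, i ≠ j →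
    (w i j ≠ ⊥ → (a i j : WithBot ℤ) ≤ w i j ∧ w i j ≤ (b i j : WithBot ℤ)) ∧
    (w i j = ⊥ ↔ w j i = (b j i : WithBot ℤ)) ∧
    (∀ x y : ℤ, w i j = (x : WithBot ℤ) → w j i = (y : WithBot ℤ) → y = -1 - x)

/-- Lower bounds of the extended Shi arrangement `A^{a,a+1}_{n-1}`:
`α(i,j) = 1 - a` for `i < j`, extended by `α(j,i) = -β(i,j) = -a`. -/
def shiAlpha {n : ℕ} (a : ℤ) (u v : Fin n) : ℤ := if u < v then 1 - a else -a

/-- Upper bounds of the extended Shi arrangement `A^{a,a+1}_{n-1}`: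
`β(i,j) = a` for `i < j`, extended by `β(j,i) = -α(i,j) = a - 1`. -/
def shiBeta {n : ℕ} (a : ℤ) (u v : Fin n) : ℤ := if u < v then a else a - 1

/-- `f` is the Pak–Stanley label of the weight function `w` with order of
gains `σ`:  `f i` is the sum of the weights `w i j` over the `j` succeeding
`i` in `σ` (the separations), plus the number of such `j` with `j < i`
(the inversions). -/
def IsPSLabel {n : ℕ} (σ : Equiv.Perm (Fin n)) (w : Fin n → Fin n → WithBot ℤ)
    (f : Fin n → ℤ) : Prop :=
  ∀ i : Fin n, (f i : WithBot ℤ) =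
    (∑ j ∈ Finset.univ.filter fun j => σ.symm i < σ.symm j, w i j)
      + (((Finset.univ.filter fun j => σ.symm i < σ.symm j ∧ j < i).card : ℤ) : WithBot ℤ)

/-- `f` is an `a`-parking function: it consists of nonnegative integers and
its weakly increasing rearrangement `f̃` satisfies `f̃ i ≤ a * i`
(`0`-indexed), i.e. `f̃(i) ≤ a (i - 1)` in `1`-indexed notation. -/
def IsAPark {n : ℕ} (a : ℤ) (f : Fin n → ℤ) : Prop :=
  (∀ i, 0 ≤ f i) ∧
  ∃ τ : Equiv.Perm (Fin n), Monotone (f ∘ τ) ∧ ∀ i : Fin n, f (τ i) ≤ a * (i : ℤ)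

private lemma wb_coe_sum {ι : Type*} (s : Finset ι) (v : ι → ℤ) :
    ((∑ j ∈ s, v j : ℤ) : WithBot ℤ) = ∑ j ∈ s, ((v j : ℤ) : WithBot ℤ) := by
  induction s using Finset.cons_induction with
  | empty => simp
  | cons i s hi ih => rw [Finset.sum_cons, Finset.sum_cons, WithBot.coe_add, ih]

theorem stmt14 (n : ℕ) (hn : 1 ≤ n) (a : ℤ) (ha : 1 ≤ a)
    (w : Fin n → Fin n → WithBot ℤ)
    (hw : ValidW (shiAlpha a) (shiBeta a) w) (hac : MAcyclic w)
    (σ : Equiv.Perm (Fin n)) (hσ : ∀ i j : Fin n, i < j → 0 ≤ w (σ i) (σ j))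
    (f : Fin n → ℤ) (hf : IsPSLabel σ w f) :
    IsAPark a f := by
  classical
  set F : Fin n → Finset (Fin n) :=
    fun i => Finset.univ.filter fun j => σ.symm i < σ.symm j with hF
  have hwpos : ∀ i j, j ∈ F i → 0 ≤ w i j := by
    intro i j hj
    rw [hF] at hj
    simp only [Finset.mem_filter, Finset.mem_univ, true_and] at hj
    simpa using hσ (σ.symm i) (σ.symm j) hj
  have hcoe : ∀ i j, j ∈ F i → w i j = (((w i j).unbotD 0 : ℤ) : WithBot ℤ) := by
    intro i j hj
    have h0 := hwpos i j hj
    have hne : w i j ≠ ⊥ := by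
      intro hb; rw [hb] at h0; exact absurd h0 (by simp)
    obtain ⟨x, hx⟩ := WithBot.ne_bot_iff_exists.mp hne
    rw [← hx]; simp
  have hfval : ∀ i : Fin n, f i = (∑ j ∈ F i, (w i j).unbotD 0)
      + (((F i).filter fun j => j < i).card : ℤ) := by
    intro i
    have h := hf i
    have hsum : (∑ j ∈ F i, w i j)
        = ((∑ j ∈ F i, (w i j).unbotD 0 : ℤ) : WithBot ℤ) := by
      rw [wb_coe_sum]
      exact Finset.sum_congr rfl (hcoe i)
    have hfilter : (Finset.univ.filter fun j => σ.symm i < σ.symm j ∧ j < i)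
        = (F i).filter fun j => j < i := by
      rw [hF, Finset.filter_filter]
    have h2 : (f i : WithBot ℤ)
        = (((∑ j ∈ F i, (w i j).unbotD 0)
            + (((F i).filter fun j => j < i).card : ℤ) : ℤ) : WithBot ℤ) := by
      rw [h, hfilter, hsum, WithBot.coe_add]
    exact_mod_cast h2
  have hnn : ∀ i, 0 ≤ f i := by
    intro i
    rw [hfval i]
    have h1 : 0 ≤ ∑ j ∈ F i, (w i j).unbotD 0 := by
      apply Finset.sum_nonneg
      intro j hj
      have h0 := hwpos i j hj
      rw [hcoe i j hj] at h0
      exact_mod_cast h0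
    positivity
  have hub : ∀ i : Fin n, f i ≤ a * ((F i).card : ℤ) := by
    intro i
    rw [hfval i]
    have hcard : ((((F i).filter fun j => j < i).card : ℕ) : ℤ)
        = ∑ j ∈ F i, (if j < i then (1 : ℤ) else 0) := by
      rw [Finset.card_filter]
      push_cast
      rfl
    rw [hcard, ← Finset.sum_add_distrib]
    have hle : ∀ j ∈ F i,
        (w i j).unbotD 0 + (if j < i then (1 : ℤ) else 0) ≤ a := by
      intro j hj
      have hjmem : σ.symm i < σ.symm j := by
        have := hj; rw [hF] at this
        simpa using this
      have hne : i ≠ j := by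
        intro hij; rw [hij] at hjmem; exact lt_irrefl _ hjmem
      have h0 := hwpos i j hj
      have hwb : w i j ≠ ⊥ := by
        intro hb; rw [hb] at h0; exact absurd h0 (by simp)
      have hbd := ((hw.2 i j hne).1 hwb).2
      rw [hcoe i j hj] at hbd
      have hbd' : (w i j).unbotD 0 ≤ shiBeta a i j := by exact_mod_cast hbd
      unfold shiBeta at hbd'
      by_cases hlt : j < i
      · have : ¬ i < j := asymm hlt
        rw [if_neg this] at hbd'
        simp only [if_pos hlt]
        omega
      · simp only [if_neg hlt]
        by_cases hlt2 : i < j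
        · rw [if_pos hlt2] at hbd'; omega
        · rw [if_neg hlt2] at hbd'; omega
    calc (∑ j ∈ F i, ((w i j).unbotD 0 + if j < i then (1:ℤ) else 0))
        ≤ ∑ _j ∈ F i, a := Finset.sum_le_sum hle
      _ = ((F i).card : ℤ) * a := by rw [Finset.sum_const, nsmul_eq_mul]
      _ = a * ((F i).card : ℤ) := mul_comm _ _
  have hcardF : ∀ m : Fin n, (F (σ m)).card = n - 1 - (m : ℕ) := by
    intro m
    have himg : F (σ m) = (Finset.Ioi m).image σ := by
      ext j
      rw [hF]
      simp only [Finset.mem_filter, Finset.mem_univ, true_and, Finset.mem_image,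
        Finset.mem_Ioi, Equiv.symm_apply_apply]
      constructor
      · intro h; exact ⟨σ.symm j, h, σ.apply_symm_apply j⟩
      · rintro ⟨q, hq, rfl⟩; rwa [Equiv.symm_apply_apply]
    rw [himg, Finset.card_image_of_injective _ σ.injective, Fin.card_Ioi]
  have hA : ∀ m : Fin n, f (σ m.rev) ≤ a * (m : ℤ) := by
    intro m
    have h1 := hub (σ m.rev)
    have h2 := hcardF m.rev
    have h3 : (m.rev : ℕ) = n - 1 - (m : ℕ) := by
      rw [Fin.val_rev]; omega
    have h4 : n - 1 - (m.rev : ℕ) = (m : ℕ) := by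
      rw [h3]; omega
    rw [h2, h4] at h1
    exact h1
  refine ⟨hnn, Tuple.sort f, Tuple.monotone_sort f, ?_⟩
  intro k
  set τ := Tuple.sort f with hτ
  have hinj : Function.Injective (fun m : Fin n => τ.symm (σ m.rev)) :=
    fun x y h => Fin.rev_injective (σ.injective (τ.symm.injective h))
  set S := (Finset.Iic k).image (fun m => τ.symm (σ m.rev)) with hS
  have hcardS : S.card = (k : ℕ) + 1 := by
    rw [hS, Finset.card_image_of_injective _ hinj, Fin.card_Iic]
  have hex : ∃ j ∈ S, k ≤ j := by
    by_contra hcon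
    push_neg at hcon
    have hsub : S ⊆ Finset.Iio k := fun j hj => Finset.mem_Iio.mpr (hcon j hj)
    have := Finset.card_le_card hsub
    rw [hcardS, Fin.card_Iio] at this
    omega
  obtain ⟨j, hjS, hkj⟩ := hex
  obtain ⟨m, hm, hje⟩ := Finset.mem_image.mp hjS
  have h1 : f (τ k) ≤ f (τ j) := Tuple.monotone_sort f hkj
  have h2 : τ j = σ m.rev := by rw [← hje]; exact τ.apply_symm_apply _
  have hmk : (m : ℤ) ≤ (k : ℤ) := by
    have := Finset.mem_Iic.mp hm
    exact_mod_cast (Fin.le_def.mp this)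
  calc f (τ k) ≤ f (τ j) := h1
    _ = f (σ m.rev) := by rw [h2]
    _ ≤ a * (m : ℤ) := hA m
    _ ≤ a * (k : ℤ) := by nlinarith
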